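/- Let x ∈ C^3, ω ∈ C with 0 < |ω| ≤ 1, and (a,c) ∈ C^2 \ {0}. If the affine line {(s,p) ∈ C^2 : a·s + c·p = a·(x1 + ω·x2) + c·ω·x3} is disjoint from G_{2,|ω|}, then the hyperplane {y ∈ C^3 : a·y1 + a·ω·y2 + c·ω·y3 = a·x1 + a·ω·x2 + c·ω·x3} is disjoint from E. -/

import Mathlib

open Complex

def tetrablockE : Set (ℂ × ℂ × ℂ) :=
  {x | ‖x.1 - (starRingEnd ℂ) x.2.1 * x.2.2‖ +
       ‖x.2.1 - (starRingEnd ℂ) x.1 * x.2.2‖ +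
       (‖x.2.2‖) ^ 2 < 1}

def Drho (ρ : ℝ) : Set (ℂ × ℂ) :=
  {z | ‖z.1‖ < 1 ∧ ‖z.2‖ < 1 ∧ ‖z.1 * z.2‖ < ρ}

def G2rho (ρ : ℝ) : Set (ℂ × ℂ) :=
  (fun z : ℂ × ℂ => (z.1 + z.2, z.1 * z.2)) '' Drho ρ

/-- If `|s - s̄ p| + |p|² < 1` where `s = λ + μ`, `p = λ μ`, then `|λ| < 1`. -/
lemma root_lt_one (l m : ℂ)
    (h : ‖(l + m) - (starRingEnd ℂ) (l + m) * (l * m)‖ +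
      (‖l * m‖) ^ 2 < 1) :
    ‖l‖ < 1 := by
  by_contra hL
  push_neg at hL
  set L := ‖l‖ with hLdef
  set M := ‖m‖ with hMdef
  have habs : ‖l * m‖ = L * M := norm_mul _ _
  have hnn : 0 ≤ ‖(l + m) - (starRingEnd ℂ) (l + m) * (l * m)‖ :=
    norm_nonneg _
  have hM0 : 0 ≤ M := norm_nonneg m
  have hLM : L * M < 1 := by nlinarith
  have hM1 : M < 1 := by nlinarith
  have key : (l + m) - (starRingEnd ℂ) (l + m) * (l * m) =
      l * (1 - m * (starRingEnd ℂ) m) + m * (1 - l * (starRingEnd ℂ) l) := by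
    simp only [map_add]
    ring
  have hml : m * (starRingEnd ℂ) m = ((M ^ 2 : ℝ) : ℂ) := by
    rw [Complex.mul_conj]; norm_cast; rw [hMdef, Complex.sq_norm]
  have hll : l * (starRingEnd ℂ) l = ((L ^ 2 : ℝ) : ℂ) := by
    rw [Complex.mul_conj]; norm_cast; rw [hLdef, Complex.sq_norm]
  have e1 : ‖l * (1 - m * (starRingEnd ℂ) m)‖ = L * (1 - M ^ 2) := by
    rw [hml, norm_mul]
    have : (1 : ℂ) - ((M ^ 2 : ℝ) : ℂ) = (((1 - M ^ 2 : ℝ)) : ℂ) := by push_cast; ring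
    rw [this, Complex.norm_real, Real.norm_eq_abs, _root_.abs_of_nonneg (show (0:ℝ) ≤ 1 - M ^ 2 by nlinarith)]
  have e2 : ‖m * (1 - l * (starRingEnd ℂ) l)‖ = M * (L ^ 2 - 1) := by
    rw [hll, norm_mul]
    have : (1 : ℂ) - ((L ^ 2 : ℝ) : ℂ) = (((1 - L ^ 2 : ℝ)) : ℂ) := by push_cast; ring
    rw [this, Complex.norm_real, Real.norm_eq_abs, _root_.abs_of_nonpos (show (1 - L ^ 2 : ℝ) ≤ 0 by nlinarith)]
    ring
  have tri : L * (1 - M ^ 2) - M * (L ^ 2 - 1) ≤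
      ‖(l + m) - (starRingEnd ℂ) (l + m) * (l * m)‖ := by
    rw [key]
    have h3 : ‖l * (1 - m * (starRingEnd ℂ) m)‖ -
        ‖m * (1 - l * (starRingEnd ℂ) l)‖ ≤
        ‖l * (1 - m * (starRingEnd ℂ) m) + m * (1 - l * (starRingEnd ℂ) l)‖ := by
      have h4 := norm_add_le
        (l * (1 - m * (starRingEnd ℂ) m) + m * (1 - l * (starRingEnd ℂ) l))
        (- (m * (1 - l * (starRingEnd ℂ) l)))
      rw [add_neg_cancel_right, norm_neg] at h4
      linarith
    rw [e1, e2] at h3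
    exact h3
  rw [habs] at h
  -- (L-1)(1-M)(1-LM) ≥ 0 gives the contradiction
  nlinarith [mul_nonneg (mul_nonneg (by linarith : (0:ℝ) ≤ L - 1) (by linarith : (0:ℝ) ≤ 1 - M))
    (by nlinarith : (0:ℝ) ≤ 1 - L * M)]

lemma mem_G2rho (s p : ℂ) (ρ : ℝ)
    (h1 : ‖s - (starRingEnd ℂ) s * p‖ + (‖p‖) ^ 2 < 1)
    (h2 : ‖p‖ < ρ) : (s, p) ∈ G2rho ρ := by
  obtain ⟨w, hw⟩ := IsAlgClosed.exists_pow_nat_eq (s ^ 2 - 4 * p) (n := 2) (by norm_num)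
  set l := (s + w) / 2
  set m := (s - w) / 2
  have hsum : l + m = s := by simp only [l, m]; ring
  have hprod : l * m = p := by
    have : l * m = (s ^ 2 - w ^ 2) / 4 := by simp only [l, m]; ring
    rw [this, hw]; ring
  have h1' : ‖(l + m) - (starRingEnd ℂ) (l + m) * (l * m)‖ +
      (‖l * m‖) ^ 2 < 1 := by rw [hsum, hprod]; exact h1
  have h1'' : ‖(m + l) - (starRingEnd ℂ) (m + l) * (m * l)‖ +
      (‖m * l‖) ^ 2 < 1 := by rw [add_comm m l, mul_comm m l]; exact h1'
  refine ⟨(l, m), ⟨root_lt_one l m h1', root_lt_one m l h1'', ?_⟩, by simp [hsum, hprod]⟩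
  rw [hprod]; exact h2

/-- The real-arithmetic core inequality. -/
lemma core_ineq (A B t r u : ℝ) (hA : 0 ≤ A) (hB : 0 ≤ B) (ht0 : 0 ≤ t) (ht1 : t < 1)
    (hr0 : 0 < r) (hr1 : r ≤ 1) (hu : 0 ≤ u)
    (hE : A + B + t ^ 2 < 1) (hu1 : u * (1 - t ^ 2) ≤ A + t * B) :
    r ^ 2 * A + (1 - r ^ 2) * u + r * B + r ^ 2 * t ^ 2 < 1 := by
  have h1 : (0:ℝ) < 1 - t ^ 2 := by nlinarith
  have h2 : (0:ℝ) ≤ 1 - r ^ 2 := by nlinarith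
  have h3 : (0:ℝ) < 1 - r ^ 2 * t ^ 2 := by nlinarith
  have hterm1 : (0:ℝ) ≤ (1 - r ^ 2) * (A + t * B - u * (1 - t ^ 2)) :=
    mul_nonneg h2 (by linarith)
  have hterm2 : (0:ℝ) < (1 - r ^ 2 * t ^ 2) * (1 - t ^ 2 - A - B) :=
    mul_pos h3 (by linarith)
  have hterm3 : (0:ℝ) ≤ B * (1 - r * t) * ((1 - r) * (1 - t)) := by
    have hrt : (0:ℝ) ≤ 1 - r * t := by nlinarith
    exact mul_nonneg (mul_nonneg hB hrt) (mul_nonneg (by linarith) (by linarith))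
  have hsum : (0:ℝ) < (1 - t ^ 2) *
      (1 - (r ^ 2 * A + (1 - r ^ 2) * u + r * B + r ^ 2 * t ^ 2)) := by nlinarith
  nlinarith [hsum, h1]

theorem line_disjoint_implies_hyperplane_disjoint
    (x : ℂ × ℂ × ℂ) (ω : ℂ) (hω0 : 0 < ‖ω‖) (hω1 : ‖ω‖ ≤ 1)
    (a c : ℂ) (hac : (a, c) ≠ (0, 0))
    (h : ∀ sp : ℂ × ℂ, a * sp.1 + c * sp.2 = a * (x.1 + ω * x.2.1) + c * (ω * x.2.2) →
      sp ∉ G2rho (‖ω‖)) :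
    ∀ y : ℂ × ℂ × ℂ,
      a * y.1 + a * ω * y.2.1 + c * ω * y.2.2 =
        a * x.1 + a * ω * x.2.1 + c * ω * x.2.2 →
      y ∉ tetrablockE := by
  intro y hy hyE
  set s := y.1 + ω * y.2.1 with hs
  set p := ω * y.2.2 with hp
  apply h (s, p) (by simp only [hs, hp]; linear_combination hy)
  -- show (s,p) ∈ G2rho |ω|
  set A := ‖y.1 - (starRingEnd ℂ) y.2.1 * y.2.2‖ with hA
  set B := ‖y.2.1 - (starRingEnd ℂ) y.1 * y.2.2‖ with hB
  set t := ‖y.2.2‖ with ht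
  set r := ‖ω‖ with hr
  have hE : A + B + t ^ 2 < 1 := hyE
  have hA0 : 0 ≤ A := norm_nonneg _
  have hB0 : 0 ≤ B := norm_nonneg _
  have ht0 : 0 ≤ t := norm_nonneg _
  have ht1 : t < 1 := by nlinarith
  apply mem_G2rho
  · -- |s - s̄ p| + |p|^2 < 1
    have hωω : ω * (starRingEnd ℂ) ω = ((r ^ 2 : ℝ) : ℂ) := by
      rw [Complex.mul_conj]; norm_cast; rw [hr, Complex.sq_norm]
    have key : s - (starRingEnd ℂ) s * p =
        (ω * (starRingEnd ℂ) ω) * (y.1 - (starRingEnd ℂ) y.2.1 * y.2.2) +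
        (1 - ω * (starRingEnd ℂ) ω) * y.1 +
        ω * (y.2.1 - (starRingEnd ℂ) y.1 * y.2.2) := by
      simp only [hs, hp, map_add, map_mul]
      ring
    have hbound : ‖s - (starRingEnd ℂ) s * p‖ ≤
        r ^ 2 * A + (1 - r ^ 2) * ‖y.1‖ + r * B := by
      rw [key]
      refine le_trans (norm_add_le _ _) ?_
      have l1 : ‖(ω * (starRingEnd ℂ) ω) *
          (y.1 - (starRingEnd ℂ) y.2.1 * y.2.2)‖ = r ^ 2 * A := by
        rw [norm_mul, hωω, Complex.norm_real, Real.norm_eq_abs, _root_.abs_of_nonneg (sq_nonneg r)]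
      have l2 : ‖(1 - ω * (starRingEnd ℂ) ω) * y.1‖ =
          (1 - r ^ 2) * ‖y.1‖ := by
        rw [norm_mul, hωω]
        have : (1 : ℂ) - ((r ^ 2 : ℝ) : ℂ) = (((1 - r ^ 2 : ℝ)) : ℂ) := by push_cast; ring
        rw [this, Complex.norm_real, Real.norm_eq_abs, _root_.abs_of_nonneg (show (0:ℝ) ≤ 1 - r ^ 2 by nlinarith)]
      have l3 : ‖ω * (y.2.1 - (starRingEnd ℂ) y.1 * y.2.2)‖ = r * B := by
        rw [norm_mul]
      calc ‖(ω * (starRingEnd ℂ) ω) * (y.1 - (starRingEnd ℂ) y.2.1 * y.2.2) +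
              (1 - ω * (starRingEnd ℂ) ω) * y.1‖ +
            ‖ω * (y.2.1 - (starRingEnd ℂ) y.1 * y.2.2)‖
          ≤ ‖(ω * (starRingEnd ℂ) ω) * (y.1 - (starRingEnd ℂ) y.2.1 * y.2.2)‖ +
            ‖(1 - ω * (starRingEnd ℂ) ω) * y.1‖ +
            ‖ω * (y.2.1 - (starRingEnd ℂ) y.1 * y.2.2)‖ := by
              have := norm_add_le ((ω * (starRingEnd ℂ) ω) *
                (y.1 - (starRingEnd ℂ) y.2.1 * y.2.2)) ((1 - ω * (starRingEnd ℂ) ω) * y.1)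
              linarith
        _ = r ^ 2 * A + (1 - r ^ 2) * ‖y.1‖ + r * B := by rw [l1, l2, l3]
    have hu1 : ‖y.1‖ * (1 - t ^ 2) ≤ A + t * B := by
      have e1 : ‖y.1‖ ≤ A + ‖y.2.1‖ * t := by
        have := norm_add_le (y.1 - (starRingEnd ℂ) y.2.1 * y.2.2)
          ((starRingEnd ℂ) y.2.1 * y.2.2)
        simp only [sub_add_cancel] at this
        calc ‖y.1‖ ≤ A + ‖(starRingEnd ℂ) y.2.1 * y.2.2‖ := this
          _ = A + ‖y.2.1‖ * t := by rw [norm_mul, Complex.norm_conj]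
      have e2 : ‖y.2.1‖ ≤ B + ‖y.1‖ * t := by
        have := norm_add_le (y.2.1 - (starRingEnd ℂ) y.1 * y.2.2)
          ((starRingEnd ℂ) y.1 * y.2.2)
        simp only [sub_add_cancel] at this
        calc ‖y.2.1‖ ≤ B + ‖(starRingEnd ℂ) y.1 * y.2.2‖ := this
          _ = B + ‖y.1‖ * t := by rw [norm_mul, Complex.norm_conj]
      nlinarith
    have habsp : ‖p‖ = r * t := by rw [hp, norm_mul]
    rw [habsp]
    have := core_ineq A B t r (‖y.1‖) hA0 hB0 ht0 ht1 hω0 hω1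
      (norm_nonneg _) hE hu1
    have hrt : (r * t) ^ 2 = r ^ 2 * t ^ 2 := by ring
    rw [hrt]
    linarith
  · -- |p| < |ω|
    rw [hp, norm_mul]
    nlinarith
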